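/- Let (A_i, B_i, E_i), i = 1,…,n, be i.i.d. triples of random variables with values in finite sets 𝒜×ℬ×ℰ, let W = f(Aⁿ) for an arbitrary function f : 𝒜ⁿ → 𝒲 into a finite set, and for each i define U_i = (W, B_{i+1}ⁿ, E^{i−1}) and V_i = (W, A^{i−1}, B^{i−1}, B_{i+1}ⁿ, E^{i−1}). Then the equivocation satisfies the exact identity H(Aⁿ | W, Eⁿ) = Σ_{i=1}^n [ H(A_i | V_i, B_i) + I(A_i ; B_i | U_i) − I(A_i ; E_i | U_i) ]. -/
import Mathlib


noncomputable section

namespace SLSC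

open scoped BigOperators

variable {Ω : Type*} [Fintype Ω]

open Classical in
/-- Probability that the random variable `f` takes the value `x`, under the
probability mass function `w` on the finite sample space `Ω`. -/
def pr {X : Type*} (w : Ω → ℝ) (f : Ω → X) (x : X) : ℝ :=
  ∑ ω, if f ω = x then w ω else 0

/-- `w` is a probability mass function on `Ω`. -/
def IsPMF (w : Ω → ℝ) : Prop := (∀ ω, 0 ≤ w ω) ∧ ∑ ω, w ω = 1

/-- Shannon entropy (base 2) of the random variable `f`. -/
def H {X : Type*} [Fintype X] (w : Ω → ℝ) (f : Ω → X) : ℝ :=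
  -∑ x, pr w f x * Real.logb 2 (pr w f x)

/-- Conditional entropy `H(f | g)` (base 2). -/
def condH {X Y : Type*} [Fintype X] [Fintype Y] (w : Ω → ℝ) (f : Ω → X) (g : Ω → Y) : ℝ :=
  H w (fun ω => (f ω, g ω)) - H w g

/-- Mutual information `I(f ; g)` (base 2). -/
def MI {X Y : Type*} [Fintype X] [Fintype Y] (w : Ω → ℝ) (f : Ω → X) (g : Ω → Y) : ℝ :=
  H w f + H w g - H w (fun ω => (f ω, g ω))

/-- Conditional mutual information `I(f ; g | h)` (base 2). -/
def condMI {X Y Z : Type*} [Fintype X] [Fintype Y] [Fintype Z]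
    (w : Ω → ℝ) (f : Ω → X) (g : Ω → Y) (h : Ω → Z) : ℝ :=
  condH w f h - condH w f (fun ω => (g ω, h ω))

/-- Expectation of the real random variable `f`. -/
def expect (w : Ω → ℝ) (f : Ω → ℝ) : ℝ := ∑ ω, w ω * f ω

/-- Markov chain `f – g – h` : `f` and `h` are conditionally independent given `g`. -/
def Markov {X Y Z : Type*} (w : Ω → ℝ) (f : Ω → X) (g : Ω → Y) (h : Ω → Z) : Prop :=
  ∀ x y z,
    pr w (fun ω => (f ω, g ω, h ω)) (x, y, z) * pr w g y
      = pr w (fun ω => (f ω, g ω)) (x, y) * pr w (fun ω => (g ω, h ω)) (y, z)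

/-- Markov chain `f – g – h – k` : each variable is conditionally independent of
the preceding ones given its immediate predecessor. -/
def Markov4 {X Y Z T : Type*} (w : Ω → ℝ)
    (f : Ω → X) (g : Ω → Y) (h : Ω → Z) (k : Ω → T) : Prop :=
  Markov w f g h ∧ Markov w (fun ω => (f ω, g ω)) h k

variable {𝒜 ℬ ℰ : Type*} [Fintype 𝒜] [Fintype ℬ] [Fintype ℰ]

/-- Weight of the i.i.d. source `(Aⁿ,Bⁿ,Eⁿ)` with per-letter distribution `p`. -/
def iidW (p : 𝒜 × ℬ × ℰ → ℝ) (n : ℕ) : (Fin n → 𝒜 × ℬ × ℰ) → ℝ :=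
  fun ω => ∏ i, p (ω i)

/-- Alice's source sequence `Aⁿ`. -/
def An (n : ℕ) : (Fin n → 𝒜 × ℬ × ℰ) → Fin n → 𝒜 := fun ω i => (ω i).1

/-- Bob's side-information sequence `Bⁿ`. -/
def Bn (n : ℕ) : (Fin n → 𝒜 × ℬ × ℰ) → Fin n → ℬ := fun ω i => (ω i).2.1

/-- Eve's side-information sequence `Eⁿ`. -/
def En (n : ℕ) : (Fin n → 𝒜 × ℬ × ℰ) → Fin n → ℰ := fun ω i => (ω i).2.2

/-- `(R,D,Δ)` is achievable for the memoryless source `p` with distortion measure `d`: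
for every `ε > 0` there is an `(n, R+ε)`-code (encoder `f`, decoder `g`, at most
`2^{n(R+ε)}` messages) whose expected distortion at Bob is at most `D + ε` and whose
normalized equivocation at Eve is at least `Δ - ε`. -/
def Achievable (p : 𝒜 × ℬ × ℰ → ℝ) (d : 𝒜 → 𝒜 → ℝ) (R D Δ : ℝ) : Prop :=
  ∀ ε > (0 : ℝ), ∃ n M : ℕ, 0 < n ∧ 0 < M ∧
    (M : ℝ) ≤ (2 : ℝ) ^ ((n : ℝ) * (R + ε)) ∧
    ∃ (f : (Fin n → 𝒜) → Fin M) (g : Fin M → (Fin n → ℬ) → Fin n → 𝒜),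
      expect (iidW p n)
          (fun ω => ((n : ℝ))⁻¹ * ∑ i, d (An n ω i) (g (f (An n ω)) (Bn n ω) i)) ≤ D + ε ∧
      Δ - ε ≤ ((n : ℝ))⁻¹ * condH (iidW p n) (An n) (fun ω => (f (An n ω), En n ω))

/-- The single-letter region of Theorem 1, with auxiliary alphabets `Fin m` (for `U`)
and `Fin k` (for `V`): there is a joint pmf `q` of `(U,V,A,B,E)` with marginal `p`
on `(A,B,E)`, a Markov chain `U – V – A – (B,E)`, and a function `Â : 𝒱 × ℬ → 𝒜`
such that `R ≥ I(V;A|B)`, `D ≥ E[d(A, Â(V,B))]` and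
`Δ ≤ [H(A|V,B) + I(A;B|U) - I(A;E|U)]₊`. -/
def InRegion (p : 𝒜 × ℬ × ℰ → ℝ) (d : 𝒜 → 𝒜 → ℝ) (R D Δ : ℝ) (m k : ℕ) : Prop :=
  ∃ (q : Fin m × Fin k × 𝒜 × ℬ × ℰ → ℝ) (Ahat : Fin k × ℬ → 𝒜),
    IsPMF q ∧
    (∀ x : 𝒜 × ℬ × ℰ, pr q (fun ω => ω.2.2) x = p x) ∧
    Markov4 q (fun ω => ω.1) (fun ω => ω.2.1) (fun ω => ω.2.2.1) (fun ω => ω.2.2.2) ∧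
    condMI q (fun ω => ω.2.1) (fun ω => ω.2.2.1) (fun ω => ω.2.2.2.1) ≤ R ∧
    expect q (fun ω => d ω.2.2.1 (Ahat (ω.2.1, ω.2.2.2.1))) ≤ D ∧
    Δ ≤ max (condH q (fun ω => ω.2.2.1) (fun ω => (ω.2.1, ω.2.2.2.1))
          + condMI q (fun ω => ω.2.2.1) (fun ω => ω.2.2.2.1) (fun ω => ω.1)
          - condMI q (fun ω => ω.2.2.1) (fun ω => ω.2.2.2.2) (fun ω => ω.1)) 0

/-- Side information `B` (second coordinate) is less noisy than `E` (third coordinate):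
`I(U;B) ≥ I(U;E)` for every `U` such that `U – A – (B,E)` is a Markov chain. -/
def LessNoisyBE (p : 𝒜 × ℬ × ℰ → ℝ) : Prop :=
  ∀ (m : ℕ) (q : Fin m × 𝒜 × ℬ × ℰ → ℝ), IsPMF q →
    (∀ x, pr q (fun ω => ω.2) x = p x) →
    Markov q (fun ω => ω.1) (fun ω => ω.2.1) (fun ω => ω.2.2) →
    MI q (fun ω => ω.1) (fun ω => ω.2.2.2) ≤ MI q (fun ω => ω.1) (fun ω => ω.2.2.1)

/-- Side information `E` (third coordinate) is less noisy than `B` (second coordinate):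
`I(U;E) ≥ I(U;B)` for every `U` such that `U – A – (B,E)` is a Markov chain. -/
def LessNoisyEB (p : 𝒜 × ℬ × ℰ → ℝ) : Prop :=
  ∀ (m : ℕ) (q : Fin m × 𝒜 × ℬ × ℰ → ℝ), IsPMF q →
    (∀ x, pr q (fun ω => ω.2) x = p x) →
    Markov q (fun ω => ω.1) (fun ω => ω.2.1) (fun ω => ω.2.2) →
    MI q (fun ω => ω.1) (fun ω => ω.2.2.1) ≤ MI q (fun ω => ω.1) (fun ω => ω.2.2.2)

/-- The auxiliary random variable `Uᵢ = (W, B_{i+1}ⁿ, E^{i-1})` where `W = f(Aⁿ)`. -/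
def auxU {𝒲 : Type*} (n : ℕ) (f : (Fin n → 𝒜) → 𝒲) (i : Fin n)
    (ω : Fin n → 𝒜 × ℬ × ℰ) :
    𝒲 × ({j : Fin n // i < j} → ℬ) × ({j : Fin n // j < i} → ℰ) :=
  (f (An n ω), fun j => (ω j.1).2.1, fun j => (ω j.1).2.2)

/-- The auxiliary random variable `Vᵢ = (W, A^{i-1}, B^{i-1}, B_{i+1}ⁿ, E^{i-1})`
where `W = f(Aⁿ)`. -/
def auxV {𝒲 : Type*} (n : ℕ) (f : (Fin n → 𝒜) → 𝒲) (i : Fin n)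
    (ω : Fin n → 𝒜 × ℬ × ℰ) :
    𝒲 × ({j : Fin n // j < i} → 𝒜) × ({j : Fin n // j < i} → ℬ)
      × ({j : Fin n // i < j} → ℬ) × ({j : Fin n // j < i} → ℰ) :=
  (f (An n ω), fun j => (ω j.1).1, fun j => (ω j.1).2.1,
    fun j => (ω j.1).2.1, fun j => (ω j.1).2.2)

/-- Binary symmetric channel with crossover probability `p`: `BSC p a e` is the
probability that the output is `e` given that the input is `a`. -/
def BSC (p : ℝ) (a e : Bool) : ℝ := if e = a then 1 - p else p

/-- Binary erasure channel with erasure probability `ε` (output `none` is the erasure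
symbol): `BEC ε a b` is the probability that the output is `b` given input `a`. -/
def BEC (ε : ℝ) (a : Bool) (b : Option Bool) : ℝ :=
  match b with
  | some b' => if b' = a then 1 - ε else 0
  | none => ε

/-- Binary entropy function (base 2). -/
def h2 (x : ℝ) : ℝ := -(x * Real.logb 2 x) - (1 - x) * Real.logb 2 (1 - x)

/-- `sop a b = a ⋆ b = a(1-b) + (1-a)b`. -/
def sop (a b : ℝ) : ℝ := a * (1 - b) + (1 - a) * b

/-- Hamming distortion on `Bool`. -/
def hamming (a a' : Bool) : ℝ := if a = a' then 0 else 1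

/-- Joint distribution of `(A,B,E)` for a uniform binary source `A`, with
`B = BEC(ε)(A)` at Bob and `E = BSC(p)(A)` at Eve (independent channel noises). -/
def binSrc (p ε : ℝ) : Bool × Option Bool × Bool → ℝ :=
  fun x => (1 / 2) * BEC ε x.1 x.2.1 * BSC p x.1 x.2.2

/-- Joint distribution of `(U,V,A,B,E)` in the achievability scheme for the binary
example: `A` uniform, `V = A ⊕ Z_α`, `U = V ⊕ Z_β`, `B = BEC(ε)(A)`, `E = A ⊕ N_p`,
with all noises mutually independent.  Coordinates: `(u,v,a,b,e)`. -/
def exJoint (p ε α β : ℝ) : Bool × Bool × Bool × Option Bool × Bool → ℝ :=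
  fun x =>
    (1 / 2) * BSC α x.2.2.1 x.2.1 * BSC β x.2.1 x.1
      * BEC ε x.2.2.1 x.2.2.2.1 * BSC p x.2.2.1 x.2.2.2.2

/-! ### Auxiliary infrastructure for the equivocation identity -/

section Infra

open Finset

variable {X Y Z : Type*}

lemma pr_nonneg (w : Ω → ℝ) (hw : ∀ ω, 0 ≤ w ω) (f : Ω → X) (x : X) :
    0 ≤ pr w f x := by
  classical
  unfold pr
  apply Finset.sum_nonneg
  intro ω _
  split <;> simp [hw ω]

lemma pr_congr_point (w : Ω → ℝ) (f : Ω → X) (g : Ω → Y)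
    (h : ∀ ω ω', f ω = f ω' ↔ g ω = g ω') (ω₀ : Ω) :
    pr w f (f ω₀) = pr w g (g ω₀) := by
  classical
  unfold pr
  apply Finset.sum_congr rfl
  intro ω _
  exact if_congr (h ω ω₀) rfl rfl

open Classical in
lemma hz_aux [Fintype X] (w : Ω → ℝ) (k : Ω → X) (v : X) (hv : v ∉ Finset.univ.image k) :
    pr w k v * Real.logb 2 (pr w k v) = 0 := by
  classical
  have : pr w k v = 0 := by
    unfold pr
    apply Finset.sum_eq_zero
    intro ω _
    have : k ω ≠ v := fun hh => hv (Finset.mem_image.2 ⟨ω, Finset.mem_univ ω, hh⟩)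
    simp [this]
  rw [this, zero_mul]

lemma H_isEmpty [Fintype X] [IsEmpty Ω] (w : Ω → ℝ) (k : Ω → X) : H w k = 0 := by
  unfold H pr
  simp

lemma H_congr [Fintype X] [Fintype Y] (w : Ω → ℝ) (f : Ω → X) (g : Ω → Y)
    (φ : X → Y) (ψ : Y → X) (hφ : ∀ ω, φ (f ω) = g ω) (hψ : ∀ ω, ψ (g ω) = f ω) :
    H w f = H w g := by
  classical
  have hiff : ∀ ω ω', f ω = f ω' ↔ g ω = g ω' := by
    intro ω ω'
    constructor
    · intro hh; rw [← hφ ω, ← hφ ω', hh]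
    · intro hh; rw [← hψ ω, ← hψ ω', hh]
  have key : ∀ ω₀, pr w f (f ω₀) = pr w g (g ω₀) := pr_congr_point w f g hiff
  have h1 : H w f = -∑ x ∈ Finset.univ.image f, pr w f x * Real.logb 2 (pr w f x) := by
    unfold H
    congr 1
    symm
    apply Finset.sum_subset (Finset.subset_univ _)
    intro x _ hx
    exact hz_aux w f x hx
  have h2 : H w g = -∑ y ∈ Finset.univ.image g, pr w g y * Real.logb 2 (pr w g y) := by
    unfold H
    congr 1
    symm
    apply Finset.sum_subset (Finset.subset_univ _)
    intro y _ hy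
    exact hz_aux w g y hy
  rw [h1, h2]
  congr 1
  apply Finset.sum_nbij' (i := φ) (j := ψ)
  · intro x hx
    obtain ⟨ω, -, rfl⟩ := Finset.mem_image.1 hx
    rw [hφ ω]
    exact Finset.mem_image.2 ⟨ω, Finset.mem_univ ω, rfl⟩
  · intro y hy
    obtain ⟨ω, -, rfl⟩ := Finset.mem_image.1 hy
    rw [hψ ω]
    exact Finset.mem_image.2 ⟨ω, Finset.mem_univ ω, rfl⟩
  · intro x hx
    obtain ⟨ω, -, rfl⟩ := Finset.mem_image.1 hx
    rw [hφ ω, hψ ω]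
  · intro y hy
    obtain ⟨ω, -, rfl⟩ := Finset.mem_image.1 hy
    rw [hψ ω, hφ ω]
  · intro x hx
    obtain ⟨ω, -, rfl⟩ := Finset.mem_image.1 hx
    rw [hφ ω, key ω]

lemma H_congr' [Fintype X] [Fintype Y] (w : Ω → ℝ) (f : Ω → X) (g : Ω → Y)
    (h : ∀ ω ω', f ω = f ω' ↔ g ω = g ω') : H w f = H w g := by
  classical
  rcases isEmpty_or_nonempty Ω with hΩ | hΩ
  · rw [H_isEmpty w f, H_isEmpty w g]
  · obtain ⟨ω₀⟩ := hΩ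
    apply H_congr w f g
      (φ := fun x => if hx : ∃ ω, f ω = x then g hx.choose else g ω₀)
      (ψ := fun y => if hy : ∃ ω, g ω = y then f hy.choose else f ω₀)
    · intro ω
      have hx : ∃ ω', f ω' = f ω := ⟨ω, rfl⟩
      rw [dif_pos hx]
      exact (h _ _).1 hx.choose_spec
    · intro ω
      have hy : ∃ ω', g ω' = g ω := ⟨ω, rfl⟩
      rw [dif_pos hy]
      exact (h _ _).2 hy.choose_spec

section CondIndep

variable {X Y Z : Type*} [Fintype X] [Fintype Y] [Fintype Z]

lemma pr_marg_y (w : Ω → ℝ) (Xf : Ω → X) (Yf : Ω → Y) (Zf : Ω → Z) (x : X) (z : Z) :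
    ∑ y, pr w (fun ω => (Xf ω, Yf ω, Zf ω)) (x, y, z)
      = pr w (fun ω => (Xf ω, Zf ω)) (x, z) := by
  classical
  unfold pr
  rw [Finset.sum_comm]
  apply Finset.sum_congr rfl
  intro ω _
  by_cases hx : Xf ω = x <;> by_cases hzz : Zf ω = z <;>
    simp [Prod.ext_iff, hx, hzz]

lemma pr_marg_x (w : Ω → ℝ) (Xf : Ω → X) (Yf : Ω → Y) (Zf : Ω → Z) (y : Y) (z : Z) :
    ∑ x, pr w (fun ω => (Xf ω, Yf ω, Zf ω)) (x, y, z)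
      = pr w (fun ω => (Yf ω, Zf ω)) (y, z) := by
  classical
  unfold pr
  rw [Finset.sum_comm]
  apply Finset.sum_congr rfl
  intro ω _
  by_cases hy : Yf ω = y <;> by_cases hzz : Zf ω = z <;>
    simp [Prod.ext_iff, hy, hzz]

lemma pr_marg_pair (w : Ω → ℝ) (Xf : Ω → X) (Zf : Ω → Z) (z : Z) :
    ∑ x, pr w (fun ω => (Xf ω, Zf ω)) (x, z) = pr w Zf z := by
  classical
  unfold pr
  rw [Finset.sum_comm]
  apply Finset.sum_congr rfl
  intro ω _
  by_cases hzz : Zf ω = z <;> simp [Prod.ext_iff, hzz]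

lemma condIndep_H (w : Ω → ℝ) (hw : ∀ ω, 0 ≤ w ω)
    (Xf : Ω → X) (Yf : Ω → Y) (Zf : Ω → Z)
    (hfact : ∀ x y z,
      pr w (fun ω => (Xf ω, Yf ω, Zf ω)) (x, y, z) * pr w Zf z
        = pr w (fun ω => (Xf ω, Zf ω)) (x, z) * pr w (fun ω => (Yf ω, Zf ω)) (y, z)) :
    H w (fun ω => (Xf ω, Yf ω, Zf ω)) + H w Zf
      = H w (fun ω => (Xf ω, Zf ω)) + H w (fun ω => (Yf ω, Zf ω)) := by
  classical
  set P3 : X → Y → Z → ℝ := fun x y z => pr w (fun ω => (Xf ω, Yf ω, Zf ω)) (x, y, z) with hP3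
  set PXZ : X → Z → ℝ := fun x z => pr w (fun ω => (Xf ω, Zf ω)) (x, z) with hPXZ
  set PYZ : Y → Z → ℝ := fun y z => pr w (fun ω => (Yf ω, Zf ω)) (y, z) with hPYZ
  set PZ : Z → ℝ := fun z => pr w Zf z with hPZ
  have hP3nn : ∀ x y z, 0 ≤ P3 x y z := fun x y z => pr_nonneg w hw _ _
  have hPXZnn : ∀ x z, 0 ≤ PXZ x z := fun x z => pr_nonneg w hw _ _
  have hmy : ∀ x z, ∑ y, P3 x y z = PXZ x z := fun x z => pr_marg_y w Xf Yf Zf x z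
  have hmx : ∀ y z, ∑ x, P3 x y z = PYZ y z := fun y z => pr_marg_x w Xf Yf Zf y z
  have hmxz : ∀ z, ∑ x, PXZ x z = PZ z := fun z => pr_marg_pair w Xf Zf z
  have hdomXZ : ∀ x y z, P3 x y z ≤ PXZ x z := by
    intro x y z
    rw [← hmy x z]
    exact Finset.single_le_sum (fun y' _ => hP3nn x y' z) (Finset.mem_univ y)
  have hdomYZ : ∀ x y z, P3 x y z ≤ PYZ y z := by
    intro x y z
    rw [← hmx y z]
    exact Finset.single_le_sum (fun x' _ => hP3nn x' y z) (Finset.mem_univ x)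
  have hdomZ : ∀ x z, PXZ x z ≤ PZ z := by
    intro x z
    rw [← hmxz z]
    exact Finset.single_le_sum (fun x' _ => hPXZnn x' z) (Finset.mem_univ x)
  have hpt : ∀ x y z,
      P3 x y z * Real.logb 2 (P3 x y z)
        = P3 x y z * Real.logb 2 (PXZ x z) + P3 x y z * Real.logb 2 (PYZ y z)
          - P3 x y z * Real.logb 2 (PZ z) := by
    intro x y z
    by_cases h0 : P3 x y z = 0
    · rw [h0]; ring
    · have hpos : 0 < P3 x y z := lt_of_le_of_ne (hP3nn x y z) (Ne.symm h0)
      have hXZ : 0 < PXZ x z := lt_of_lt_of_le hpos (hdomXZ x y z)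
      have hYZ : 0 < PYZ y z := lt_of_lt_of_le hpos (hdomYZ x y z)
      have hZ : 0 < PZ z := lt_of_lt_of_le hXZ (hdomZ x z)
      have hP : P3 x y z = PXZ x z * PYZ y z / PZ z := by
        have hf := hfact x y z
        field_simp
        linarith [hf]
      rw [hP, Real.logb_div (by positivity) (ne_of_gt hZ),
        Real.logb_mul (ne_of_gt hXZ) (ne_of_gt hYZ)]
      ring
  have e3 : H w (fun ω => (Xf ω, Yf ω, Zf ω))
      = -∑ x, ∑ y, ∑ z, P3 x y z * Real.logb 2 (P3 x y z) := by
    unfold H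
    rw [Fintype.sum_prod_type]
    congr 1
    apply Finset.sum_congr rfl
    intro x _
    rw [Fintype.sum_prod_type]
  have eXZ : H w (fun ω => (Xf ω, Zf ω))
      = -∑ x, ∑ z, PXZ x z * Real.logb 2 (PXZ x z) := by
    unfold H
    rw [Fintype.sum_prod_type]
  have eYZ : H w (fun ω => (Yf ω, Zf ω))
      = -∑ y, ∑ z, PYZ y z * Real.logb 2 (PYZ y z) := by
    unfold H
    rw [Fintype.sum_prod_type]
  have eZ : H w Zf = -∑ z, PZ z * Real.logb 2 (PZ z) := rfl
  have hT1 : ∑ x, ∑ y, ∑ z, P3 x y z * Real.logb 2 (PXZ x z)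
      = ∑ x, ∑ z, PXZ x z * Real.logb 2 (PXZ x z) := by
    apply Finset.sum_congr rfl
    intro x _
    rw [Finset.sum_comm]
    apply Finset.sum_congr rfl
    intro z _
    rw [← Finset.sum_mul, hmy]
  have hT2 : ∑ x, ∑ y, ∑ z, P3 x y z * Real.logb 2 (PYZ y z)
      = ∑ y, ∑ z, PYZ y z * Real.logb 2 (PYZ y z) := by
    rw [Finset.sum_comm]
    apply Finset.sum_congr rfl
    intro y _
    rw [Finset.sum_comm]
    apply Finset.sum_congr rfl
    intro z _
    rw [← Finset.sum_mul, hmx]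
  have hT3 : ∑ x, ∑ y, ∑ z, P3 x y z * Real.logb 2 (PZ z)
      = ∑ z, PZ z * Real.logb 2 (PZ z) := by
    calc ∑ x, ∑ y, ∑ z, P3 x y z * Real.logb 2 (PZ z)
        = ∑ x, ∑ z, PXZ x z * Real.logb 2 (PZ z) := by
          apply Finset.sum_congr rfl
          intro x _
          rw [Finset.sum_comm]
          apply Finset.sum_congr rfl
          intro z _
          rw [← Finset.sum_mul, hmy]
      _ = ∑ z, ∑ x, PXZ x z * Real.logb 2 (PZ z) := Finset.sum_comm
      _ = ∑ z, PZ z * Real.logb 2 (PZ z) := by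
          apply Finset.sum_congr rfl
          intro z _
          rw [← Finset.sum_mul, hmxz]
  have key : ∑ x, ∑ y, ∑ z, P3 x y z * Real.logb 2 (P3 x y z)
      = (∑ x, ∑ z, PXZ x z * Real.logb 2 (PXZ x z))
        + (∑ y, ∑ z, PYZ y z * Real.logb 2 (PYZ y z))
        - (∑ z, PZ z * Real.logb 2 (PZ z)) := by
    calc ∑ x, ∑ y, ∑ z, P3 x y z * Real.logb 2 (P3 x y z)
        = ∑ x, ∑ y, ∑ z, (P3 x y z * Real.logb 2 (PXZ x z)
            + P3 x y z * Real.logb 2 (PYZ y z) - P3 x y z * Real.logb 2 (PZ z)) := by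
          apply Finset.sum_congr rfl
          intro x _
          apply Finset.sum_congr rfl
          intro y _
          apply Finset.sum_congr rfl
          intro z _
          exact hpt x y z
      _ = (∑ x, ∑ y, ∑ z, P3 x y z * Real.logb 2 (PXZ x z))
            + (∑ x, ∑ y, ∑ z, P3 x y z * Real.logb 2 (PYZ y z))
            - (∑ x, ∑ y, ∑ z, P3 x y z * Real.logb 2 (PZ z)) := by
          simp only [Finset.sum_add_distrib, Finset.sum_sub_distrib]
      _ = _ := by rw [hT1, hT2, hT3]
  rw [e3, eXZ, eYZ, eZ, key]
  ring

end CondIndep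


lemma ite_iff_congr {α : Type*} {c₁ c₂ : Prop} {a b : α}
    (i₁ : Decidable c₁) (i₂ : Decidable c₂) (h : c₁ ↔ c₂) :
    (@ite _ c₁ i₁ a b) = (@ite _ c₂ i₂ a b) := by
  have hc : c₁ = c₂ := propext h
  subst hc
  rw [Subsingleton.elim i₁ i₂]

section Master

variable {Ω₁ Ω₂ T Xt Yt Zt : Type*} [Fintype Ω₁] [Fintype Ω₂]

open Classical in
lemma pr_mul_pr (w₁ : Ω₁ → ℝ) (w₂ : Ω₂ → ℝ) {V₁ V₂ : Type*}
    (F₁ : Ω₁ → V₁) (F₂ : Ω₂ → V₂) (v₁ : V₁) (v₂ : V₂) :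
    pr w₁ F₁ v₁ * pr w₂ F₂ v₂
      = ∑ σ₁ : Ω₁, ∑ σ₂ : Ω₂,
          if F₁ σ₁ = v₁ ∧ F₂ σ₂ = v₂ then w₁ σ₁ * w₂ σ₂ else 0 := by
  unfold pr
  rw [Fintype.sum_mul_sum]
  apply Finset.sum_congr rfl
  intro σ₁ _
  apply Finset.sum_congr rfl
  intro σ₂ _
  by_cases h₁ : F₁ σ₁ = v₁ <;> by_cases h₂ : F₂ σ₂ = v₂ <;> simp [h₁, h₂]

open Classical in
lemma pr_prod_split (e : Ω ≃ Ω₁ × Ω₂) (w : Ω → ℝ) (w₁ : Ω₁ → ℝ) (w₂ : Ω₂ → ℝ)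
    (hw : ∀ ω, w ω = w₁ (e ω).1 * w₂ (e ω).2)
    {V : Type*} (F : Ω → V) (v : V) :
    pr w F v = ∑ σ₁ : Ω₁, ∑ σ₂ : Ω₂,
      if F (e.symm (σ₁, σ₂)) = v then w₁ σ₁ * w₂ σ₂ else 0 := by
  unfold pr
  rw [← Equiv.sum_comp e.symm (fun ω => if F ω = v then w ω else 0), Fintype.sum_prod_type]
  apply Finset.sum_congr rfl
  intro σ₁ _
  apply Finset.sum_congr rfl
  intro σ₂ _
  have : w (e.symm (σ₁, σ₂)) = w₁ σ₁ * w₂ σ₂ := by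
    rw [hw]
    simp
  rw [this]

lemma pr_fact_prod (e : Ω ≃ Ω₁ × Ω₂) (w : Ω → ℝ) (w₁ : Ω₁ → ℝ) (w₂ : Ω₂ → ℝ)
    (hw : ∀ ω, w ω = w₁ (e ω).1 * w₂ (e ω).2)
    (t : Ω₁ → T) (φ : Ω₁ → Xt) (ψ : Ω₂ → Yt) (ζ : T → Ω₂ → Zt) (r : Zt → T)
    (hr : ∀ a σ, r (ζ a σ) = a) (x : Xt) (y : Yt) (z : Zt) :
    pr w (fun ω => (φ (e ω).1, ψ (e ω).2, ζ (t (e ω).1) (e ω).2)) (x, y, z)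
        * pr w (fun ω => ζ (t (e ω).1) (e ω).2) z
      = pr w (fun ω => (φ (e ω).1, ζ (t (e ω).1) (e ω).2)) (x, z)
        * pr w (fun ω => (ψ (e ω).2, ζ (t (e ω).1) (e ω).2)) (y, z) := by
  classical
  have hsymm1 : ∀ σ : Ω₁ × Ω₂, (e (e.symm σ)).1 = σ.1 := by intro σ; rw [Equiv.apply_symm_apply]
  have hsymm2 : ∀ σ : Ω₁ × Ω₂, (e (e.symm σ)).2 = σ.2 := by intro σ; rw [Equiv.apply_symm_apply]
  have hXYZ : pr w (fun ω => (φ (e ω).1, ψ (e ω).2, ζ (t (e ω).1) (e ω).2)) (x, y, z)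
      = pr w₁ (fun σ₁ => (φ σ₁, t σ₁)) (x, r z)
        * pr w₂ (fun σ₂ => (ψ σ₂, ζ (r z) σ₂)) (y, z) := by
    rw [pr_prod_split e w w₁ w₂ hw, pr_mul_pr]
    apply Finset.sum_congr rfl
    intro σ₁ _
    apply Finset.sum_congr rfl
    intro σ₂ _
    apply ite_iff_congr
    rw [hsymm1, hsymm2]
    simp only [Prod.ext_iff]
    constructor
    · rintro ⟨h1, h2, h3⟩
      have ht : t σ₁ = r z := by rw [← h3, hr]
      exact ⟨⟨h1, ht⟩, h2, by rw [← ht]; exact h3⟩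
    · rintro ⟨⟨h1, ht⟩, h2, h3⟩
      exact ⟨h1, h2, by rw [ht]; exact h3⟩
  have hZ : pr w (fun ω => ζ (t (e ω).1) (e ω).2) z
      = pr w₁ t (r z) * pr w₂ (fun σ₂ => ζ (r z) σ₂) z := by
    rw [pr_prod_split e w w₁ w₂ hw, pr_mul_pr]
    apply Finset.sum_congr rfl
    intro σ₁ _
    apply Finset.sum_congr rfl
    intro σ₂ _
    apply ite_iff_congr
    rw [hsymm1, hsymm2]
    constructor
    · intro h3
      have ht : t σ₁ = r z := by rw [← h3, hr]
      exact ⟨ht, by rw [← ht]; exact h3⟩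
    · rintro ⟨ht, h3⟩
      rw [ht]
      exact h3
  have hXZ : pr w (fun ω => (φ (e ω).1, ζ (t (e ω).1) (e ω).2)) (x, z)
      = pr w₁ (fun σ₁ => (φ σ₁, t σ₁)) (x, r z) * pr w₂ (fun σ₂ => ζ (r z) σ₂) z := by
    rw [pr_prod_split e w w₁ w₂ hw, pr_mul_pr]
    apply Finset.sum_congr rfl
    intro σ₁ _
    apply Finset.sum_congr rfl
    intro σ₂ _
    apply ite_iff_congr
    rw [hsymm1, hsymm2]
    simp only [Prod.ext_iff]
    constructor
    · rintro ⟨h1, h3⟩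
      have ht : t σ₁ = r z := by rw [← h3, hr]
      exact ⟨⟨h1, ht⟩, by rw [← ht]; exact h3⟩
    · rintro ⟨⟨h1, ht⟩, h3⟩
      exact ⟨h1, by rw [ht]; exact h3⟩
  have hYZ : pr w (fun ω => (ψ (e ω).2, ζ (t (e ω).1) (e ω).2)) (y, z)
      = pr w₁ t (r z) * pr w₂ (fun σ₂ => (ψ σ₂, ζ (r z) σ₂)) (y, z) := by
    rw [pr_prod_split e w w₁ w₂ hw, pr_mul_pr]
    apply Finset.sum_congr rfl
    intro σ₁ _
    apply Finset.sum_congr rfl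
    intro σ₂ _
    apply ite_iff_congr
    rw [hsymm1, hsymm2]
    simp only [Prod.ext_iff]
    constructor
    · rintro ⟨h2, h3⟩
      have ht : t σ₁ = r z := by rw [← h3, hr]
      exact ⟨ht, h2, by rw [← ht]; exact h3⟩
    · rintro ⟨ht, h2, h3⟩
      exact ⟨h2, by rw [ht]; exact h3⟩
  rw [hXYZ, hZ, hXZ, hYZ]
  ring

end Master


end Infra

section Canon

variable {𝒜' ℬ' ℰ' 𝒲' : Type*} [Fintype 𝒜'] [Fintype ℬ'] [Fintype ℰ'] [Fintype 𝒲']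

lemma fin_ne_of_gt' {n : ℕ} {i j : Fin n} (h : (i : ℕ) < (j : ℕ)) : ¬ j = i := by
  intro hh
  subst hh
  omega

lemma fin_ne_of_lt' {n : ℕ} {i j : Fin n} (h : (j : ℕ) < (i : ℕ)) : ¬ j = i := by
  intro hh
  subst hh
  omega

lemma iidW_nonneg (p : 𝒜' × ℬ' × ℰ' → ℝ) (hp : ∀ x, 0 ≤ p x) (n : ℕ) :
    ∀ ω, 0 ≤ iidW p n ω := by
  intro ω
  exact Finset.prod_nonneg (fun j _ => hp _)

/-- canonical `(W, A_{<k}, Bⁿ)`. -/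
def Zm (n : ℕ) (f : (Fin n → 𝒜') → 𝒲') (k : ℕ) :
    (Fin n → 𝒜' × ℬ' × ℰ') → 𝒲' × ({j : Fin n // (j : ℕ) < k} → 𝒜') × (Fin n → ℬ') :=
  fun ω => (f (An n ω), fun j => (ω j.1).1, Bn n ω)

/-- canonical `(W, B_{≥k}, E_{<k})`. -/
def Zc (n : ℕ) (f : (Fin n → 𝒜') → 𝒲') (k : ℕ) :
    (Fin n → 𝒜' × ℬ' × ℰ')
      → 𝒲' × ({j : Fin n // k ≤ (j : ℕ)} → ℬ') × ({j : Fin n // (j : ℕ) < k} → ℰ') :=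
  fun ω => (f (An n ω), fun j => (ω j.1).2.1, fun j => (ω j.1).2.2)

/-- canonical `(W, Aⁿ, B_{≥k}, E_{<k})`. -/
def Za (n : ℕ) (f : (Fin n → 𝒜') → 𝒲') (k : ℕ) :
    (Fin n → 𝒜' × ℬ' × ℰ')
      → 𝒲' × (Fin n → 𝒜') × ({j : Fin n // k ≤ (j : ℕ)} → ℬ') × ({j : Fin n // (j : ℕ) < k} → ℰ') :=
  fun ω => (f (An n ω), An n ω, fun j => (ω j.1).2.1, fun j => (ω j.1).2.2)

/-- canonical `(W, A_i, B_{>i}, E_{<i})`. -/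
def Z1 (n : ℕ) (f : (Fin n → 𝒜') → 𝒲') (i : Fin n) :
    (Fin n → 𝒜' × ℬ' × ℰ')
      → 𝒲' × 𝒜' × ({j : Fin n // (i : ℕ) < (j : ℕ)} → ℬ') × ({j : Fin n // (j : ℕ) < (i : ℕ)} → ℰ') :=
  fun ω => (f (An n ω), (ω i).1, fun j => (ω j.1).2.1, fun j => (ω j.1).2.2)

def qm (p : 𝒜' × ℬ' × ℰ' → ℝ) (n : ℕ) (f : (Fin n → 𝒜') → 𝒲') (k : ℕ) : ℝ :=
  H (iidW p n) (Zm n f k)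

def qc (p : 𝒜' × ℬ' × ℰ' → ℝ) (n : ℕ) (f : (Fin n → 𝒜') → 𝒲') (k : ℕ) : ℝ :=
  H (iidW p n) (Zc n f k)

def qa (p : 𝒜' × ℬ' × ℰ' → ℝ) (n : ℕ) (f : (Fin n → 𝒜') → 𝒲') (k : ℕ) : ℝ :=
  H (iidW p n) (Za n f k)

/-- CI instance 1: `ξ(A_i,B_i,E_i) ⟂ A_{≠i} | (W, A_i, B_{>i}, E_{<i})`. -/
lemma CI1 {D : Type*} [Fintype D] (p : 𝒜' × ℬ' × ℰ' → ℝ) (hp : ∀ x, 0 ≤ p x)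
    (n : ℕ) (f : (Fin n → 𝒜') → 𝒲') (i : Fin n) (ξ : 𝒜' × ℬ' × ℰ' → D) :
    H (iidW p n) (fun ω => (ξ (ω i),
        (fun j : {j : Fin n // ¬ j = i} => (ω j.1).1), Z1 n f i ω))
      + H (iidW p n) (Z1 n f i)
    = H (iidW p n) (fun ω => (ξ (ω i), Z1 n f i ω))
      + H (iidW p n) (fun ω => ((fun j : {j : Fin n // ¬ j = i} => (ω j.1).1), Z1 n f i ω)) := by
  classical
  set P : Fin n → Prop := fun j => j = i with hP
  set e := Equiv.piEquivPiSubtypeProd P (fun _ => 𝒜' × ℬ' × ℰ') with he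
  set w₁ : ({j : Fin n // P j} → 𝒜' × ℬ' × ℰ') → ℝ := fun σ₁ => ∏ j, p (σ₁ j) with hw₁
  set w₂ : ({j : Fin n // ¬ P j} → 𝒜' × ℬ' × ℰ') → ℝ := fun σ₂ => ∏ j, p (σ₂ j) with hw₂
  have hw : ∀ ω, iidW p n ω = w₁ (e ω).1 * w₂ (e ω).2 := by
    intro ω
    unfold iidW
    rw [hw₁, hw₂]
    rw [← Fintype.prod_subtype_mul_prod_subtype P (fun j => p (ω j))]
    congr! <;> rfl
  set t : ({j : Fin n // P j} → 𝒜' × ℬ' × ℰ') → 𝒜' := fun σ₁ => (σ₁ ⟨i, rfl⟩).1 with ht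
  set φ : ({j : Fin n // P j} → 𝒜' × ℬ' × ℰ') → D := fun σ₁ => ξ (σ₁ ⟨i, rfl⟩) with hφ
  set ψ : ({j : Fin n // ¬ P j} → 𝒜' × ℬ' × ℰ') → ({j : Fin n // ¬ j = i} → 𝒜') :=
    fun σ₂ => fun j => (σ₂ j).1 with hψ
  set ζ : 𝒜' → ({j : Fin n // ¬ P j} → 𝒜' × ℬ' × ℰ')
      → 𝒲' × 𝒜' × ({j : Fin n // (i : ℕ) < (j : ℕ)} → ℬ')
          × ({j : Fin n // (j : ℕ) < (i : ℕ)} → ℰ') :=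
    fun a σ₂ => (f (fun j => if h : j = i then a else (σ₂ ⟨j, h⟩).1), a,
      fun j => (σ₂ ⟨j.1, fin_ne_of_gt' j.2⟩).2.1,
      fun j => (σ₂ ⟨j.1, fin_ne_of_lt' j.2⟩).2.2) with hζ
  set r : (𝒲' × 𝒜' × ({j : Fin n // (i : ℕ) < (j : ℕ)} → ℬ')
      × ({j : Fin n // (j : ℕ) < (i : ℕ)} → ℰ')) → 𝒜' := fun z => z.2.1 with hreact
  have hr : ∀ a σ, r (ζ a σ) = a := fun a σ => rfl
  have key := condIndep_H (iidW p n) (iidW_nonneg p hp n)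
    (fun ω => φ (e ω).1) (fun ω => ψ (e ω).2) (fun ω => ζ (t (e ω).1) (e ω).2)
    (fun x y z => pr_fact_prod e (iidW p n) w₁ w₂ hw t φ ψ ζ r hr x y z)
  have hglue : ∀ ω : Fin n → 𝒜' × ℬ' × ℰ',
      (fun j => if h : j = i then (t ((e ω).1)) else ((e ω).2 ⟨j, h⟩).1) = An n ω := by
    intro ω
    funext j
    by_cases h : j = i
    · subst h
      rw [dif_pos rfl]
      rfl
    · rw [dif_neg h]
      rfl
  have hZeq : (fun ω => ζ (t (e ω).1) (e ω).2) = Z1 n f i := by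
    funext ω
    show (f _, _, _, _) = _
    rw [hglue ω]
    rfl
  have hXYZeq : (fun ω => (φ (e ω).1, ψ (e ω).2, ζ (t (e ω).1) (e ω).2))
      = fun ω => (ξ (ω i), (fun j : {j : Fin n // ¬ j = i} => (ω j.1).1), Z1 n f i ω) := by
    funext ω
    have := congrFun hZeq ω
    simp only [Prod.mk.injEq]
    exact ⟨rfl, rfl, this⟩
  have hXZeq : (fun ω => (φ (e ω).1, ζ (t (e ω).1) (e ω).2))
      = fun ω => (ξ (ω i), Z1 n f i ω) := by
    funext ω
    have := congrFun hZeq ω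
    simp only [Prod.mk.injEq]
    exact ⟨rfl, this⟩
  have hYZeq : (fun ω => (ψ (e ω).2, ζ (t (e ω).1) (e ω).2))
      = fun ω => ((fun j : {j : Fin n // ¬ j = i} => (ω j.1).1), Z1 n f i ω) := by
    funext ω
    have := congrFun hZeq ω
    simp only [Prod.mk.injEq]
    exact ⟨rfl, this⟩
  beta_reduce at key
  rw [hXYZeq, hZeq, hXZeq, hYZeq] at key
  exact key

/-- CI instance 2: `A_i ⟂ E_{<i} | (W, A_{<i}, Bⁿ)`. -/
lemma CI2 (p : 𝒜' × ℬ' × ℰ' → ℝ) (hp : ∀ x, 0 ≤ p x)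
    (n : ℕ) (f : (Fin n → 𝒜') → 𝒲') (i : Fin n) :
    H (iidW p n) (fun ω => ((fun j : {j : Fin n // (j : ℕ) < (i : ℕ)} => (ω j.1).2.2),
        (ω i).1, Zm n f (i : ℕ) ω))
      + H (iidW p n) (Zm n f (i : ℕ))
    = H (iidW p n) (fun ω => ((fun j : {j : Fin n // (j : ℕ) < (i : ℕ)} => (ω j.1).2.2),
        Zm n f (i : ℕ) ω))
      + H (iidW p n) (fun ω => ((ω i).1, Zm n f (i : ℕ) ω)) := by
  classical
  set P : Fin n → Prop := fun j => (j : ℕ) < (i : ℕ) with hP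
  set e := Equiv.piEquivPiSubtypeProd P (fun _ => 𝒜' × ℬ' × ℰ') with he
  set w₁ : ({j : Fin n // P j} → 𝒜' × ℬ' × ℰ') → ℝ := fun σ₁ => ∏ j, p (σ₁ j) with hw₁
  set w₂ : ({j : Fin n // ¬ P j} → 𝒜' × ℬ' × ℰ') → ℝ := fun σ₂ => ∏ j, p (σ₂ j) with hw₂
  have hw : ∀ ω, iidW p n ω = w₁ (e ω).1 * w₂ (e ω).2 := by
    intro ω
    unfold iidW
    rw [hw₁, hw₂]
    rw [← Fintype.prod_subtype_mul_prod_subtype P (fun j => p (ω j))]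
    congr! <;> rfl
  have hii : ¬ P i := by simp [hP]
  set t : ({j : Fin n // P j} → 𝒜' × ℬ' × ℰ')
      → ({j : Fin n // P j} → 𝒜') × ({j : Fin n // P j} → ℬ') :=
    fun σ₁ => (fun j => (σ₁ j).1, fun j => (σ₁ j).2.1) with ht
  set φ : ({j : Fin n // P j} → 𝒜' × ℬ' × ℰ') → ({j : Fin n // (j : ℕ) < (i : ℕ)} → ℰ') :=
    fun σ₁ => fun j => (σ₁ j).2.2 with hφ
  set ψ : ({j : Fin n // ¬ P j} → 𝒜' × ℬ' × ℰ') → 𝒜' :=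
    fun σ₂ => (σ₂ ⟨i, hii⟩).1 with hψ
  set ζ : (({j : Fin n // P j} → 𝒜') × ({j : Fin n // P j} → ℬ'))
      → ({j : Fin n // ¬ P j} → 𝒜' × ℬ' × ℰ')
      → 𝒲' × ({j : Fin n // (j : ℕ) < (i : ℕ)} → 𝒜') × (Fin n → ℬ') :=
    fun tt σ₂ => (f (fun j => if h : P j then tt.1 ⟨j, h⟩ else (σ₂ ⟨j, h⟩).1), tt.1,
      fun j => if h : P j then tt.2 ⟨j, h⟩ else (σ₂ ⟨j, h⟩).2.1) with hζ
  set r : (𝒲' × ({j : Fin n // (j : ℕ) < (i : ℕ)} → 𝒜') × (Fin n → ℬ'))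
      → ({j : Fin n // P j} → 𝒜') × ({j : Fin n // P j} → ℬ') :=
    fun z => (z.2.1, fun j => z.2.2 j.1) with hrdef
  have hr : ∀ a σ, r (ζ a σ) = a := by
    intro a σ
    refine Prod.ext rfl ?_
    funext j
    show (if h : P j.1 then a.2 ⟨j.1, h⟩ else _) = a.2 j
    rw [dif_pos j.2]
  have key := condIndep_H (iidW p n) (iidW_nonneg p hp n)
    (fun ω => φ (e ω).1) (fun ω => ψ (e ω).2) (fun ω => ζ (t (e ω).1) (e ω).2)
    (fun x y z => pr_fact_prod e (iidW p n) w₁ w₂ hw t φ ψ ζ r hr x y z)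
  have hglueA : ∀ ω : Fin n → 𝒜' × ℬ' × ℰ',
      (fun j => if h : P j then ((t ((e ω).1)).1 ⟨j, h⟩) else ((e ω).2 ⟨j, h⟩).1) = An n ω := by
    intro ω
    funext j
    by_cases h : P j
    · rw [dif_pos h]
      rfl
    · rw [dif_neg h]
      rfl
  have hglueB : ∀ ω : Fin n → 𝒜' × ℬ' × ℰ',
      (fun j => if h : P j then ((t ((e ω).1)).2 ⟨j, h⟩) else ((e ω).2 ⟨j, h⟩).2.1) = Bn n ω := by
    intro ω
    funext j
    by_cases h : P j
    · rw [dif_pos h]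
      rfl
    · rw [dif_neg h]
      rfl
  have hZeq : (fun ω => ζ (t (e ω).1) (e ω).2) = Zm n f (i : ℕ) := by
    funext ω
    show (f _, _, _) = _
    rw [hglueA ω, hglueB ω]
    rfl
  have hXYZeq : (fun ω => (φ (e ω).1, ψ (e ω).2, ζ (t (e ω).1) (e ω).2))
      = fun ω => ((fun j : {j : Fin n // (j : ℕ) < (i : ℕ)} => (ω j.1).2.2),
          (ω i).1, Zm n f (i : ℕ) ω) := by
    funext ω
    have := congrFun hZeq ω
    simp only [Prod.mk.injEq]
    exact ⟨rfl, rfl, this⟩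
  have hXZeq : (fun ω => (φ (e ω).1, ζ (t (e ω).1) (e ω).2))
      = fun ω => ((fun j : {j : Fin n // (j : ℕ) < (i : ℕ)} => (ω j.1).2.2),
          Zm n f (i : ℕ) ω) := by
    funext ω
    have := congrFun hZeq ω
    simp only [Prod.mk.injEq]
    exact ⟨rfl, this⟩
  have hYZeq : (fun ω => (ψ (e ω).2, ζ (t (e ω).1) (e ω).2))
      = fun ω => ((ω i).1, Zm n f (i : ℕ) ω) := by
    funext ω
    have := congrFun hZeq ω
    simp only [Prod.mk.injEq]
    exact ⟨rfl, this⟩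
  beta_reduce at key
  rw [hXYZeq, hZeq, hXZeq, hYZeq] at key
  exact key


end Canon


/-- For an i.i.d. source `(Aᵢ,Bᵢ,Eᵢ)`, `W = f(Aⁿ)`, `Uᵢ = (W, B_{i+1}ⁿ, E^{i-1})`
and `Vᵢ = (W, A^{i-1}, B^{i-1}, B_{i+1}ⁿ, E^{i-1})`, the equivocation satisfies
`H(Aⁿ | W, Eⁿ) = Σᵢ [H(Aᵢ|Vᵢ,Bᵢ) + I(Aᵢ;Bᵢ|Uᵢ) - I(Aᵢ;Eᵢ|Uᵢ)]`. -/
theorem equivocation_identity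
    {𝒜 ℬ ℰ 𝒲 : Type*} [Fintype 𝒜] [Fintype ℬ] [Fintype ℰ] [Fintype 𝒲]
    (p : 𝒜 × ℬ × ℰ → ℝ) (hp : IsPMF p) (n : ℕ)
    (f : (Fin n → 𝒜) → 𝒲) :
    condH (iidW p n) (An n) (fun ω => (f (An n ω), En n ω))
      = ∑ i : Fin n,
          (condH (iidW p n) (fun ω => (ω i).1)
              (fun ω => (auxV n f i ω, (ω i).2.1))
            + condMI (iidW p n) (fun ω => (ω i).1) (fun ω => (ω i).2.1) (auxU n f i)
            - condMI (iidW p n) (fun ω => (ω i).1) (fun ω => (ω i).2.2) (auxU n f i)) := by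
  classical
  have hp0 : ∀ x, 0 ≤ p x := hp.1
  -- telescoping lemmas
  have tele1 : ∀ g : ℕ → ℝ, ∑ i : Fin n, (g ((i : ℕ) + 1) - g (i : ℕ)) = g n - g 0 := by
    intro g
    rw [Fin.sum_univ_eq_sum_range (fun kk => g (kk + 1) - g kk) n]
    exact Finset.sum_range_sub g n
  have tele2 : ∀ c a : ℕ → ℝ,
      ∑ i : Fin n, ((c (i : ℕ) - a (i : ℕ)) - (c ((i : ℕ) + 1) - a ((i : ℕ) + 1)))
        = (c 0 - a 0) - (c n - a n) := by
    intro c a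
    rw [Fin.sum_univ_eq_sum_range (fun kk => (c kk - a kk) - (c (kk + 1) - a (kk + 1))) n]
    exact Finset.sum_range_sub' (fun kk => c kk - a kk) n
  -- boundary congruences
  have hL1 : H (iidW p n) (fun ω => (An n ω, (f (An n ω), En n ω))) = qa p n f n := by
    unfold qa
    apply H_congr'
    intro ω ω'
    constructor
    · intro h
      simp only [Prod.mk.injEq] at h
      obtain ⟨hAn, hW, hEn⟩ := h
      simp only [Za, Prod.mk.injEq]
      refine ⟨hW, hAn, ?_, ?_⟩
      · funext j
        exact absurd j.2 (Nat.not_le.mpr j.1.isLt)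
      · funext j
        exact congrFun hEn j.1
    · intro h
      simp only [Za, Prod.mk.injEq] at h
      obtain ⟨hW, hAn, -, hEl⟩ := h
      simp only [Prod.mk.injEq]
      exact ⟨hAn, hW, funext fun j => congrFun hEl ⟨j, j.isLt⟩⟩
  have hL2 : H (iidW p n) (fun ω => (f (An n ω), En n ω)) = qc p n f n := by
    unfold qc
    apply H_congr'
    intro ω ω'
    constructor
    · intro h
      simp only [Prod.mk.injEq] at h
      obtain ⟨hW, hEn⟩ := h
      simp only [Zc, Prod.mk.injEq]
      refine ⟨hW, ?_, ?_⟩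
      · funext j
        exact absurd j.2 (Nat.not_le.mpr j.1.isLt)
      · funext j
        exact congrFun hEn j.1
    · intro h
      simp only [Zc, Prod.mk.injEq] at h
      obtain ⟨hW, -, hEl⟩ := h
      simp only [Prod.mk.injEq]
      exact ⟨hW, funext fun j => congrFun hEl ⟨j, j.isLt⟩⟩
  have hB3 : qa p n f 0 = qm p n f n := by
    unfold qa qm
    apply H_congr'
    intro ω ω'
    constructor
    · intro h
      simp only [Za, Prod.mk.injEq] at h
      obtain ⟨hW, hAn, hBge, -⟩ := h
      simp only [Zm, Prod.mk.injEq]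
      exact ⟨hW, funext fun j => congrFun hAn j.1,
        funext fun j => congrFun hBge ⟨j, Nat.zero_le _⟩⟩
    · intro h
      simp only [Zm, Prod.mk.injEq] at h
      obtain ⟨hW, hAlt, hBn⟩ := h
      simp only [Za, Prod.mk.injEq]
      refine ⟨hW, funext fun j => congrFun hAlt ⟨j, j.isLt⟩,
        funext fun j => congrFun hBn j.1, ?_⟩
      funext j
      exact absurd j.2 (Nat.not_lt_zero _)
  have hB4 : qc p n f 0 = qm p n f 0 := by
    unfold qc qm
    apply H_congr'
    intro ω ω'
    constructor
    · intro h
      simp only [Zc, Prod.mk.injEq] at h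
      obtain ⟨hW, hBge, -⟩ := h
      simp only [Zm, Prod.mk.injEq]
      refine ⟨hW, ?_, funext fun j => congrFun hBge ⟨j, Nat.zero_le _⟩⟩
      funext j
      exact absurd j.2 (Nat.not_lt_zero _)
    · intro h
      simp only [Zm, Prod.mk.injEq] at h
      obtain ⟨hW, -, hBn⟩ := h
      simp only [Zc, Prod.mk.injEq]
      refine ⟨hW, funext fun j => congrFun hBn j.1, ?_⟩
      funext j
      exact absurd j.2 (Nat.not_lt_zero _)
  -- the per-index identity
  have hmain : ∀ i : Fin n,
      (condH (iidW p n) (fun ω => (ω i).1) (fun ω => (auxV n f i ω, (ω i).2.1))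
        + condMI (iidW p n) (fun ω => (ω i).1) (fun ω => (ω i).2.1) (auxU n f i)
        - condMI (iidW p n) (fun ω => (ω i).1) (fun ω => (ω i).2.2) (auxU n f i))
      = (qm p n f ((i : ℕ) + 1) - qm p n f (i : ℕ))
        + ((qc p n f (i : ℕ) - qa p n f (i : ℕ))
            - (qc p n f ((i : ℕ) + 1) - qa p n f ((i : ℕ) + 1))) := by
    intro i
    have key2 := CI2 p hp0 n f i
    have key1B := CI1 p hp0 n f i (fun x => x.2.1)
    have key1E := CI1 p hp0 n f i (fun x => x.2.2)
    beta_reduce at key1B key1E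
    have hqm : H (iidW p n) (Zm n f (i : ℕ)) = qm p n f (i : ℕ) := rfl
    have hC1 : H (iidW p n) (fun ω => ((ω i).1, (auxV n f i ω, (ω i).2.1)))
        = H (iidW p n) (fun ω => ((fun j : {j : Fin n // (j : ℕ) < (i : ℕ)} => (ω j.1).2.2),
            (ω i).1, Zm n f (i : ℕ) ω)) := by
      apply H_congr'
      intro ω ω'
      constructor
      · intro h
        simp only [auxV, Prod.mk.injEq] at h
        obtain ⟨hAi, ⟨hW, hAlt, hBlt, hBgt, hElt⟩, hBi⟩ := h
        simp only [Zm, Prod.mk.injEq]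
        refine ⟨hElt, hAi, hW, hAlt, ?_⟩
        funext j
        show (ω j).2.1 = (ω' j).2.1
        rcases Nat.lt_trichotomy (j : ℕ) (i : ℕ) with hj | hj | hj
        · exact congrFun hBlt ⟨j, hj⟩
        · have hji : j = i := Fin.ext hj
          rw [hji]
          exact hBi
        · exact congrFun hBgt ⟨j, hj⟩
      · intro h
        simp only [Zm, Prod.mk.injEq] at h
        obtain ⟨hElt, hAi, hW, hAlt, hBn⟩ := h
        simp only [auxV, Prod.mk.injEq]
        exact ⟨hAi, ⟨hW, hAlt, funext fun j => congrFun hBn j.1,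
          funext fun j => congrFun hBn j.1, hElt⟩, congrFun hBn i⟩
    have hC2 : H (iidW p n) (fun ω => (auxV n f i ω, (ω i).2.1))
        = H (iidW p n) (fun ω => ((fun j : {j : Fin n // (j : ℕ) < (i : ℕ)} => (ω j.1).2.2),
            Zm n f (i : ℕ) ω)) := by
      apply H_congr'
      intro ω ω'
      constructor
      · intro h
        simp only [auxV, Prod.mk.injEq] at h
        obtain ⟨⟨hW, hAlt, hBlt, hBgt, hElt⟩, hBi⟩ := h
        simp only [Zm, Prod.mk.injEq]
        refine ⟨hElt, hW, hAlt, ?_⟩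
        funext j
        show (ω j).2.1 = (ω' j).2.1
        rcases Nat.lt_trichotomy (j : ℕ) (i : ℕ) with hj | hj | hj
        · exact congrFun hBlt ⟨j, hj⟩
        · have hji : j = i := Fin.ext hj
          rw [hji]
          exact hBi
        · exact congrFun hBgt ⟨j, hj⟩
      · intro h
        simp only [Zm, Prod.mk.injEq] at h
        obtain ⟨hElt, hW, hAlt, hBn⟩ := h
        simp only [auxV, Prod.mk.injEq]
        exact ⟨⟨hW, hAlt, funext fun j => congrFun hBn j.1,
          funext fun j => congrFun hBn j.1, hElt⟩, congrFun hBn i⟩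
    have hC3 : H (iidW p n) (fun ω => ((ω i).1, Zm n f (i : ℕ) ω))
        = qm p n f ((i : ℕ) + 1) := by
      unfold qm
      apply H_congr'
      intro ω ω'
      constructor
      · intro h
        simp only [Zm, Prod.mk.injEq] at h
        obtain ⟨hAi, hW, hAlt, hBn⟩ := h
        simp only [Zm, Prod.mk.injEq]
        refine ⟨hW, ?_, hBn⟩
        funext j
        show (ω j.1).1 = (ω' j.1).1
        by_cases hj : (j.1 : ℕ) < (i : ℕ)
        · exact congrFun hAlt ⟨j.1, hj⟩
        · have h2 := j.2
          have hji : j.1 = i := Fin.ext (by omega)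
          rw [hji]
          exact hAi
      · intro h
        simp only [Zm, Prod.mk.injEq] at h
        obtain ⟨hW, hAlt, hBn⟩ := h
        simp only [Zm, Prod.mk.injEq]
        exact ⟨congrFun hAlt ⟨i, Nat.lt_succ_self _⟩, hW,
          funext fun j => congrFun hAlt ⟨j.1, Nat.lt_succ_of_lt j.2⟩, hBn⟩
    have hC4 : H (iidW p n) (fun ω => ((ω i).2.1, auxU n f i ω)) = qc p n f (i : ℕ) := by
      unfold qc
      apply H_congr'
      intro ω ω'
      constructor
      · intro h
        simp only [auxU, Prod.mk.injEq] at h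
        obtain ⟨hBi, hW, hBgt, hElt⟩ := h
        simp only [Zc, Prod.mk.injEq]
        refine ⟨hW, ?_, hElt⟩
        funext j
        show (ω j.1).2.1 = (ω' j.1).2.1
        by_cases hj : (i : ℕ) < (j.1 : ℕ)
        · exact congrFun hBgt ⟨j.1, hj⟩
        · have h2 := j.2
          have hji : j.1 = i := Fin.ext (by omega)
          rw [hji]
          exact hBi
      · intro h
        simp only [Zc, Prod.mk.injEq] at h
        obtain ⟨hW, hBge, hElt⟩ := h
        simp only [auxU, Prod.mk.injEq]
        exact ⟨congrFun hBge ⟨i, le_refl _⟩, hW,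
          funext fun j => congrFun hBge ⟨j.1, Nat.le_of_lt j.2⟩, hElt⟩
    have hC5 : H (iidW p n) (fun ω => ((ω i).2.2, auxU n f i ω)) = qc p n f ((i : ℕ) + 1) := by
      unfold qc
      apply H_congr'
      intro ω ω'
      constructor
      · intro h
        simp only [auxU, Prod.mk.injEq] at h
        obtain ⟨hEi, hW, hBgt, hElt⟩ := h
        simp only [Zc, Prod.mk.injEq]
        refine ⟨hW, ?_, ?_⟩
        · funext j
          exact congrFun hBgt ⟨j.1, Nat.lt_of_succ_le j.2⟩
        · funext j
          show (ω j.1).2.2 = (ω' j.1).2.2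
          by_cases hj : (j.1 : ℕ) < (i : ℕ)
          · exact congrFun hElt ⟨j.1, hj⟩
          · have h2 := j.2
            have hji : j.1 = i := Fin.ext (by omega)
            rw [hji]
            exact hEi
      · intro h
        simp only [Zc, Prod.mk.injEq] at h
        obtain ⟨hW, hBge, hElt⟩ := h
        simp only [auxU, Prod.mk.injEq]
        exact ⟨congrFun hElt ⟨i, Nat.lt_succ_self _⟩, hW,
          funext fun j => congrFun hBge ⟨j.1, Nat.succ_le_of_lt j.2⟩,
          funext fun j => congrFun hElt ⟨j.1, Nat.lt_succ_of_lt j.2⟩⟩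
    have hC6 : H (iidW p n) (fun ω => ((ω i).1, ((ω i).2.1, auxU n f i ω)))
        = H (iidW p n) (fun ω => ((ω i).2.1, Z1 n f i ω)) := by
      apply H_congr'
      intro ω ω'
      constructor
      · intro h
        simp only [auxU, Prod.mk.injEq] at h
        obtain ⟨hAi, hBi, hW, hBgt, hElt⟩ := h
        simp only [Z1, Prod.mk.injEq]
        exact ⟨hBi, hW, hAi, hBgt, hElt⟩
      · intro h
        simp only [Z1, Prod.mk.injEq] at h
        obtain ⟨hBi, hW, hAi, hBgt, hElt⟩ := h
        simp only [auxU, Prod.mk.injEq]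
        exact ⟨hAi, hBi, hW, hBgt, hElt⟩
    have hC7 : H (iidW p n) (fun ω => ((ω i).1, ((ω i).2.2, auxU n f i ω)))
        = H (iidW p n) (fun ω => ((ω i).2.2, Z1 n f i ω)) := by
      apply H_congr'
      intro ω ω'
      constructor
      · intro h
        simp only [auxU, Prod.mk.injEq] at h
        obtain ⟨hAi, hEi, hW, hBgt, hElt⟩ := h
        simp only [Z1, Prod.mk.injEq]
        exact ⟨hEi, hW, hAi, hBgt, hElt⟩
      · intro h
        simp only [Z1, Prod.mk.injEq] at h
        obtain ⟨hEi, hW, hAi, hBgt, hElt⟩ := h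
        simp only [auxU, Prod.mk.injEq]
        exact ⟨hAi, hEi, hW, hBgt, hElt⟩
    have hC8 : H (iidW p n) (fun ω => ((ω i).2.1,
          (fun j : {j : Fin n // ¬ j = i} => (ω j.1).1), Z1 n f i ω))
        = qa p n f (i : ℕ) := by
      unfold qa
      apply H_congr'
      intro ω ω'
      constructor
      · intro h
        simp only [Z1, Prod.mk.injEq] at h
        obtain ⟨hBi, hAne, hW, hAi, hBgt, hElt⟩ := h
        simp only [Za, Prod.mk.injEq]
        refine ⟨hW, ?_, ?_, hElt⟩
        · funext j
          show (ω j).1 = (ω' j).1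
          by_cases hj : j = i
          · rw [hj]
            exact hAi
          · exact congrFun hAne ⟨j, hj⟩
        · funext j
          show (ω j.1).2.1 = (ω' j.1).2.1
          by_cases hj : (i : ℕ) < (j.1 : ℕ)
          · exact congrFun hBgt ⟨j.1, hj⟩
          · have h2 := j.2
            have hji : j.1 = i := Fin.ext (by omega)
            rw [hji]
            exact hBi
      · intro h
        simp only [Za, Prod.mk.injEq] at h
        obtain ⟨hW, hAn, hBge, hElt⟩ := h
        simp only [Z1, Prod.mk.injEq]
        exact ⟨congrFun hBge ⟨i, le_refl _⟩, funext fun j => congrFun hAn j.1,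
          hW, congrFun hAn i,
          funext fun j => congrFun hBge ⟨j.1, Nat.le_of_lt j.2⟩, hElt⟩
    have hC9 : H (iidW p n) (fun ω => ((ω i).2.2,
          (fun j : {j : Fin n // ¬ j = i} => (ω j.1).1), Z1 n f i ω))
        = qa p n f ((i : ℕ) + 1) := by
      unfold qa
      apply H_congr'
      intro ω ω'
      constructor
      · intro h
        simp only [Z1, Prod.mk.injEq] at h
        obtain ⟨hEi, hAne, hW, hAi, hBgt, hElt⟩ := h
        simp only [Za, Prod.mk.injEq]
        refine ⟨hW, ?_, ?_, ?_⟩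
        · funext j
          show (ω j).1 = (ω' j).1
          by_cases hj : j = i
          · rw [hj]
            exact hAi
          · exact congrFun hAne ⟨j, hj⟩
        · funext j
          exact congrFun hBgt ⟨j.1, Nat.lt_of_succ_le j.2⟩
        · funext j
          show (ω j.1).2.2 = (ω' j.1).2.2
          by_cases hj : (j.1 : ℕ) < (i : ℕ)
          · exact congrFun hElt ⟨j.1, hj⟩
          · have h2 := j.2
            have hji : j.1 = i := Fin.ext (by omega)
            rw [hji]
            exact hEi
      · intro h
        simp only [Za, Prod.mk.injEq] at h
        obtain ⟨hW, hAn, hBge, hElt⟩ := h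
        simp only [Z1, Prod.mk.injEq]
        exact ⟨congrFun hElt ⟨i, Nat.lt_succ_self _⟩, funext fun j => congrFun hAn j.1,
          hW, congrFun hAn i,
          funext fun j => congrFun hBge ⟨j.1, Nat.succ_le_of_lt j.2⟩,
          funext fun j => congrFun hElt ⟨j.1, Nat.lt_succ_of_lt j.2⟩⟩
    simp only [condH, condMI]
    linarith [key2, key1B, key1E, hqm, hC1, hC2, hC3, hC4, hC5, hC6, hC7, hC8, hC9]
  calc condH (iidW p n) (An n) (fun ω => (f (An n ω), En n ω))
      = qa p n f n - qc p n f n := by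
        simp only [condH]
        rw [hL1, hL2]
    _ = ∑ i : Fin n, ((qm p n f ((i : ℕ) + 1) - qm p n f (i : ℕ))
          + ((qc p n f (i : ℕ) - qa p n f (i : ℕ))
              - (qc p n f ((i : ℕ) + 1) - qa p n f ((i : ℕ) + 1)))) := by
        rw [Finset.sum_add_distrib, tele1 (qm p n f), tele2 (qc p n f) (qa p n f)]
        linarith [hB3, hB4]
    _ = ∑ i : Fin n,
          (condH (iidW p n) (fun ω => (ω i).1)
              (fun ω => (auxV n f i ω, (ω i).2.1))
            + condMI (iidW p n) (fun ω => (ω i).1) (fun ω => (ω i).2.1) (auxU n f i)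
            - condMI (iidW p n) (fun ω => (ω i).1) (fun ω => (ω i).2.2) (auxU n f i)) :=
      Finset.sum_congr rfl (fun i _ => (hmain i).symm)


end SLSC

end
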